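/- If G is a hypo-unique-domination graph of order at least 3, then for every vertex x of G, the graph G−x has no γ-critical vertices; that is, γ((G−x)−u) ≥ γ(G−x) for all vertices u of G−x. -/

import Mathlib

open SimpleGraph

variable {V : Type*}

/-- `D` is a dominating set of `G`. -/
def IsDomSet (G : SimpleGraph V) (D : Finset V) : Prop :=
  ∀ v : V, ∃ u ∈ D, u = v ∨ G.Adj u v

/-- The domination number `γ(G)`. -/
noncomputable def domNum (G : SimpleGraph V) : ℕ :=
  sInf {n | ∃ D : Finset V, IsDomSet G D ∧ D.card = n}

/-- `D` is a minimum dominating set (γ-set) of `G`. -/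
def IsGammaSet (G : SimpleGraph V) (D : Finset V) : Prop :=
  IsDomSet G D ∧ D.card = domNum G

/-- The graph `G - x` obtained by deleting the vertex `x`. -/
def vdel (G : SimpleGraph V) (x : V) : SimpleGraph {u : V // u ≠ x} :=
  SimpleGraph.comap Subtype.val G

/-- `G` is a hypo-unique-domination graph: `G` has at least two γ-sets,
but `G - x` has a unique γ-set for every vertex `x`. -/
def HypoUD (G : SimpleGraph V) : Prop :=
  (∃ D₁ D₂ : Finset V, IsGammaSet G D₁ ∧ IsGammaSet G D₂ ∧ D₁ ≠ D₂) ∧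
  ∀ x : V, ∃! D : Finset {u : V // u ≠ x}, IsGammaSet (vdel G x) D

/-- `D` is an efficient dominating set of `G`: every vertex is dominated exactly once. -/
def IsEDS (G : SimpleGraph V) (D : Finset V) : Prop :=
  ∀ v : V, ∃! u : V, u ∈ D ∧ (u = v ∨ G.Adj u v)

/-- `G` is a hypo-efficient-domination graph: `G` has no EDS,
but `G - x` has an EDS for every vertex `x`. -/
def HypoED (G : SimpleGraph V) : Prop :=
  (¬ ∃ D : Finset V, IsEDS G D) ∧
  ∀ x : V, ∃ D : Finset {u : V // u ≠ x}, IsEDS (vdel G x) D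

def DomOn (G : SimpleGraph V) (s D : Finset V) : Prop :=
  D ⊆ s ∧ ∀ v ∈ s, ∃ d ∈ D, d = v ∨ G.Adj d v

noncomputable def gam (G : SimpleGraph V) (s : Finset V) : ℕ :=
  sInf {n | ∃ D : Finset V, DomOn G s D ∧ D.card = n}

lemma gam_spec (G : SimpleGraph V) (s : Finset V) :
    ∃ D : Finset V, DomOn G s D ∧ D.card = gam G s := by
  have h : gam G s ∈ {n | ∃ D : Finset V, DomOn G s D ∧ D.card = n} :=
    Nat.sInf_mem ⟨s.card, s, ⟨Finset.Subset.refl s, fun v hv => ⟨v, hv, Or.inl rfl⟩⟩, rfl⟩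
  exact h

lemma gam_le {G : SimpleGraph V} {s D : Finset V} (h : DomOn G s D) : gam G s ≤ D.card :=
  Nat.sInf_le ⟨D, h, rfl⟩

lemma domNum_eq_gam {W : Type*} [Fintype W] (G : SimpleGraph V) (f : W → V)
    (hf : Function.Injective f) (s : Finset V) (hs : ∀ v, v ∈ s ↔ ∃ w, f w = v) :
    domNum (G.comap f) = gam G s := by
  classical
  unfold domNum gam
  congr 1
  ext n
  simp only [Set.mem_setOf_eq]
  constructor
  · rintro ⟨D, hdom, rfl⟩
    refine ⟨D.map ⟨f, hf⟩, ⟨?_, ?_⟩, Finset.card_map _⟩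
    · intro d hd
      obtain ⟨w, hw, rfl⟩ := Finset.mem_map.1 hd
      exact (hs _).2 ⟨w, rfl⟩
    · intro v hv
      obtain ⟨w, rfl⟩ := (hs v).1 hv
      obtain ⟨d, hd, hcase⟩ := hdom w
      refine ⟨f d, Finset.mem_map_of_mem _ hd, ?_⟩
      rcases hcase with h | h
      · exact Or.inl (congrArg f h)
      · exact Or.inr h
  · rintro ⟨D, ⟨hsub, hdom⟩, rfl⟩
    refine ⟨Finset.univ.filter (fun w => f w ∈ D), ?_, ?_⟩
    · intro w
      obtain ⟨d, hd, hcase⟩ := hdom (f w) ((hs _).2 ⟨w, rfl⟩)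
      obtain ⟨wd, rfl⟩ := (hs d).1 (hsub hd)
      refine ⟨wd, by simp [hd], ?_⟩
      rcases hcase with h | h
      · exact Or.inl (hf h)
      · exact Or.inr h
    · refine Finset.card_bij (fun w _ => f w) ?_ ?_ ?_
      · intro a ha; simpa using (Finset.mem_filter.1 ha).2
      · intro a ha b hb hab; exact hf hab
      · intro b hb
        obtain ⟨w, rfl⟩ := (hs b).1 (hsub hb)
        exact ⟨w, by simp [hb], rfl⟩

lemma domNum_vdel [Fintype V] [DecidableEq V] (G : SimpleGraph V) (y : V) :
    domNum (vdel G y) = gam G (Finset.univ.erase y) := by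
  apply domNum_eq_gam G Subtype.val Subtype.val_injective
  intro v
  simp only [Finset.mem_erase, Finset.mem_univ, and_true]
  exact ⟨fun h => ⟨⟨v, h⟩, rfl⟩, fun ⟨w, hw⟩ => hw ▸ w.2⟩

lemma domNum_vdel2 [Fintype V] [DecidableEq V] (G : SimpleGraph V) (x : V) (u : {w : V // w ≠ x}) :
    domNum (vdel (vdel G x) u) = gam G ((Finset.univ.erase x).erase u.val) := by
  have h : vdel (vdel G x) u = G.comap (fun a : {w : {v : V // v ≠ x} // w ≠ u} => a.val.val) := rfl
  rw [h]
  apply domNum_eq_gam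
  · intro a b hab
    exact Subtype.ext (Subtype.ext hab)
  · intro v
    simp only [Finset.mem_erase, Finset.mem_univ, and_true]
    constructor
    · rintro ⟨hvu, hvx⟩
      exact ⟨⟨⟨v, hvx⟩, fun hEq => hvu (congrArg Subtype.val hEq)⟩, rfl⟩
    · rintro ⟨a, rfl⟩
      exact ⟨fun h' => a.2 (Subtype.ext h'), a.1.2⟩

lemma domNum_univ [Fintype V] (G : SimpleGraph V) : domNum G = gam G Finset.univ := by
  unfold domNum gam
  congr 1; ext n
  simp only [Set.mem_setOf_eq]
  constructor
  · rintro ⟨D, hdom, rfl⟩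
    exact ⟨D, ⟨D.subset_univ, fun v _ => hdom v⟩, rfl⟩
  · rintro ⟨D, ⟨_, hdom⟩, rfl⟩
    exact ⟨D, fun v => hdom v (Finset.mem_univ v), rfl⟩

lemma uniq_gamma {G : SimpleGraph V} [Fintype V] [DecidableEq V]
    (hG : ∀ y : V, ∃! D : Finset {u : V // u ≠ y}, IsGammaSet (vdel G y) D)
    (y : V) {D₁ D₂ : Finset V}
    (h₁ : DomOn G (Finset.univ.erase y) D₁) (hc₁ : D₁.card = gam G (Finset.univ.erase y))
    (h₂ : DomOn G (Finset.univ.erase y) D₂) (hc₂ : D₂.card = gam G (Finset.univ.erase y)) :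
    D₁ = D₂ := by
  classical
  obtain ⟨D₀, _, huniq⟩ := hG y
  have key : ∀ D : Finset V, DomOn G (Finset.univ.erase y) D →
      D.card = gam G (Finset.univ.erase y) → D.subtype (· ≠ y) = D₀ := by
    intro D hD hc
    apply huniq
    constructor
    · intro v
      obtain ⟨d, hd, hcase⟩ := hD.2 v.val (by simp [v.2])
      have hdy : d ≠ y := (Finset.mem_erase.1 (hD.1 hd)).1
      refine ⟨⟨d, hdy⟩, ?_, ?_⟩
      · simpa [Finset.mem_subtype] using hd
      · rcases hcase with h | h
        · exact Or.inl (Subtype.ext h)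
        · exact Or.inr h
    · have hall : ∀ d ∈ D, d ≠ y := fun d hd => (Finset.mem_erase.1 (hD.1 hd)).1
      rw [Finset.card_subtype, Finset.filter_true_of_mem hall, hc, ← domNum_vdel]
  have hmap : ∀ D : Finset V, DomOn G (Finset.univ.erase y) D →
      D = (D.subtype (· ≠ y)).map (Function.Embedding.subtype _) := by
    intro D hD
    rw [Finset.subtype_map]
    exact (Finset.filter_true_of_mem (fun d hd => (Finset.mem_erase.1 (hD.1 hd)).1)).symm
  rw [hmap D₁ h₁, hmap D₂ h₂, key D₁ h₁ hc₁, key D₂ h₂ hc₂]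

theorem hypoUD_no_critical_after_deletion [Fintype V] [DecidableEq V]
    (G : SimpleGraph V) (h : HypoUD G) (h3 : 3 ≤ Fintype.card V) :
    ∀ x : V, ∀ u : {w : V // w ≠ x},
      domNum (vdel G x) ≤ domNum (vdel (vdel G x) u) := by
  classical
  intro x uu
  obtain ⟨u, hux⟩ := uu
  rw [domNum_vdel, domNum_vdel2]
  change gam G (Finset.univ.erase x) ≤ gam G ((Finset.univ.erase x).erase u)
  by_contra hcon
  push_neg at hcon
  obtain ⟨M, hM, hMc⟩ := gam_spec G ((Finset.univ.erase x).erase u)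
  have huM : u ∉ M := fun hm => ((Finset.mem_erase.1 (hM.1 hm)).1) rfl
  have hxM : x ∉ M := fun hm => ((Finset.mem_erase.1 ((Finset.mem_erase.1 (hM.1 hm)).2)).1) rfl
  have hMel : ∀ d ∈ M, d ≠ u ∧ d ≠ x := by
    intro d hd
    have h1 := Finset.mem_erase.1 (hM.1 hd)
    exact ⟨h1.1, (Finset.mem_erase.1 h1.2).1⟩
  have hAdom : DomOn G (Finset.univ.erase x) (insert u M) := by
    constructor
    · intro d hd
      rcases Finset.mem_insert.1 hd with rfl | hdM
      · exact Finset.mem_erase.2 ⟨hux, Finset.mem_univ _⟩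
      · exact Finset.mem_erase.2 ⟨(hMel d hdM).2, Finset.mem_univ _⟩
    · intro v hv
      by_cases hvu : v = u
      · exact ⟨u, Finset.mem_insert_self u M, Or.inl hvu.symm⟩
      · obtain ⟨d, hd, hcov⟩ := hM.2 v (Finset.mem_erase.2 ⟨hvu, hv⟩)
        exact ⟨d, Finset.mem_insert_of_mem hd, hcov⟩
  have hk1 : gam G (Finset.univ.erase x) ≤ gam G ((Finset.univ.erase x).erase u) + 1 := by
    have := gam_le hAdom
    rw [Finset.card_insert_of_notMem huM, hMc] at this
    exact this
  have hkj : gam G (Finset.univ.erase x) = gam G ((Finset.univ.erase x).erase u) + 1 := by omega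
  have hUx : ∀ D : Finset V, DomOn G (Finset.univ.erase x) D →
      D.card = gam G (Finset.univ.erase x) → D = insert u M := by
    intro D hD hc
    exact uniq_gamma h.2 x hD hc hAdom
      (by rw [Finset.card_insert_of_notMem huM, hMc]; omega)
  have hu_nbr : ∀ z, G.Adj u z → z = x := by
    intro z hz
    by_contra hzx
    have hzu : z ≠ u := fun h' => G.loopless.irrefl u (h' ▸ hz)
    have hzM : z ∉ M := by
      intro hzM
      have hdom : DomOn G (Finset.univ.erase x) M := by
        refine ⟨fun d hd => Finset.mem_erase.2 ⟨(hMel d hd).2, Finset.mem_univ _⟩, ?_⟩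
        intro v hv
        by_cases hvu : v = u
        · exact ⟨z, hzM, Or.inr (hvu ▸ hz.symm)⟩
        · obtain ⟨d, hd, hcov⟩ := hM.2 v (Finset.mem_erase.2 ⟨hvu, hv⟩)
          exact ⟨d, hd, hcov⟩
      have := gam_le hdom
      rw [hMc] at this
      omega
    have hdom : DomOn G (Finset.univ.erase x) (insert z M) := by
      constructor
      · intro d hd
        rcases Finset.mem_insert.1 hd with rfl | hdM
        · exact Finset.mem_erase.2 ⟨hzx, Finset.mem_univ _⟩
        · exact Finset.mem_erase.2 ⟨(hMel d hdM).2, Finset.mem_univ _⟩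
      · intro v hv
        by_cases hvu : v = u
        · exact ⟨z, Finset.mem_insert_self _ _, Or.inr (hvu ▸ hz.symm)⟩
        · by_cases hvz : v = z
          · exact ⟨z, Finset.mem_insert_self _ _, Or.inl hvz.symm⟩
          · obtain ⟨d, hd, hcov⟩ := hM.2 v (Finset.mem_erase.2 ⟨hvu, hv⟩)
            exact ⟨d, Finset.mem_insert_of_mem hd, hcov⟩
    have heq := hUx _ hdom (by rw [Finset.card_insert_of_notMem hzM, hMc]; omega)
    have hmem : z ∈ insert u M := heq ▸ Finset.mem_insert_self z M
    rcases Finset.mem_insert.1 hmem with h' | h'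
    · exact hzu h'
    · exact hzM h'
  have hu_nbr' : ∀ z, G.Adj z u → z = x := fun z hz => hu_nbr z hz.symm
  have hUxu : ∀ D : Finset V, DomOn G ((Finset.univ.erase x).erase u) D →
      D.card = gam G ((Finset.univ.erase x).erase u) → D = M := by
    intro D hD hc
    have hDu : u ∉ D := fun hd => (Finset.mem_erase.1 (hD.1 hd)).1 rfl
    have hdom : DomOn G (Finset.univ.erase x) (insert u D) := by
      constructor
      · intro d hd
        rcases Finset.mem_insert.1 hd with rfl | hdD
        · exact Finset.mem_erase.2 ⟨hux, Finset.mem_univ _⟩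
        · exact (Finset.erase_subset _ _) (hD.1 hdD)
      · intro v hv
        by_cases hvu : v = u
        · exact ⟨u, Finset.mem_insert_self _ _, Or.inl hvu.symm⟩
        · obtain ⟨d, hd, hcov⟩ := hD.2 v (Finset.mem_erase.2 ⟨hvu, hv⟩)
          exact ⟨d, Finset.mem_insert_of_mem hd, hcov⟩
    have heq := hUx _ hdom (by rw [Finset.card_insert_of_notMem hDu, hc]; omega)
    have := congrArg (fun S => Finset.erase S u) heq
    simpa [Finset.erase_insert hDu, Finset.erase_insert huM] using this
  obtain ⟨D₁, D₂, hgs₁, hgs₂, hDne⟩ := h.1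
  have hD₁ : DomOn G Finset.univ D₁ := ⟨D₁.subset_univ, fun v _ => hgs₁.1 v⟩
  have hD₂ : DomOn G Finset.univ D₂ := ⟨D₂.subset_univ, fun v _ => hgs₂.1 v⟩
  have hD₁c : D₁.card = gam G Finset.univ := by rw [hgs₁.2, domNum_univ]
  have hD₂c : D₂.card = gam G Finset.univ := by rw [hgs₂.2, domNum_univ]
  by_cases hadj : G.Adj x u
  · -- main case
    -- MAIN CASE: G.Adj x u
    have hBuniv : DomOn G Finset.univ (insert x M) := by
      refine ⟨Finset.subset_univ _, ?_⟩
      intro v _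
      by_cases hvx : v = x
      · exact ⟨x, Finset.mem_insert_self _ _, Or.inl hvx.symm⟩
      · by_cases hvu : v = u
        · exact ⟨x, Finset.mem_insert_self _ _, Or.inr (hvu ▸ hadj)⟩
        · obtain ⟨d, hd, hcov⟩ := hM.2 v
            (Finset.mem_erase.2 ⟨hvu, Finset.mem_erase.2 ⟨hvx, Finset.mem_univ v⟩⟩)
          exact ⟨d, Finset.mem_insert_of_mem hd, hcov⟩
    have hg_le : gam G Finset.univ ≤ gam G (Finset.univ.erase x) := by
      have := gam_le hBuniv
      rw [Finset.card_insert_of_notMem hxM, hMc] at this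
      omega
    have hnb : ∀ D : Finset V, DomOn G Finset.univ D → D.card = gam G Finset.univ →
        u ∈ D → x ∈ D → False := by
      intro D hD hc huD hxD
      have hdom : DomOn G Finset.univ (D.erase u) := by
        refine ⟨Finset.subset_univ _, ?_⟩
        intro v _
        obtain ⟨d, hd, hcov⟩ := hD.2 v (Finset.mem_univ v)
        by_cases hdu : d = u
        · subst hdu
          rcases hcov with rfl | hAdj
          · exact ⟨x, Finset.mem_erase.2 ⟨G.ne_of_adj hadj, hxD⟩, Or.inr hadj⟩
          · have hvx := hu_nbr v hAdj
            subst hvx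
            exact ⟨v, Finset.mem_erase.2 ⟨G.ne_of_adj hadj, hxD⟩, Or.inl rfl⟩
        · exact ⟨d, Finset.mem_erase.2 ⟨hdu, hd⟩, hcov⟩
      have hle := gam_le hdom
      rw [Finset.card_erase_of_mem huD, hc] at hle
      have hpos := Finset.card_pos.2 ⟨u, huD⟩
      omega
    have hwithu : ∀ D : Finset V, DomOn G Finset.univ D → D.card = gam G Finset.univ → u ∈ D →
        gam G Finset.univ = gam G (Finset.univ.erase x) ∧ D = insert u M := by
      intro D hD hc huD
      have hxD : x ∉ D := fun hxD => hnb D hD hc huD hxD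
      have he : DomOn G ((Finset.univ.erase x).erase u) (D.erase u) := by
        constructor
        · intro d hd
          have hd1 := Finset.mem_erase.1 hd
          refine Finset.mem_erase.2 ⟨hd1.1, Finset.mem_erase.2 ⟨?_, Finset.mem_univ _⟩⟩
          exact fun h' => hxD (h' ▸ hd1.2)
        · intro v hv
          have hv1 := Finset.mem_erase.1 hv
          have hvu : v ≠ u := hv1.1
          have hvx : v ≠ x := (Finset.mem_erase.1 hv1.2).1
          obtain ⟨d, hd, hcov⟩ := hD.2 v (Finset.mem_univ v)
          have hdu : d ≠ u := by
            rintro rfl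
            rcases hcov with h' | h'
            · exact hvu h'.symm
            · exact hvx (hu_nbr v h')
          exact ⟨d, Finset.mem_erase.2 ⟨hdu, hd⟩, hcov⟩
      have hle := gam_le he
      rw [Finset.card_erase_of_mem huD, hc] at hle
      have hpos := Finset.card_pos.2 ⟨u, huD⟩
      have hgk : gam G Finset.univ = gam G (Finset.univ.erase x) := by omega
      refine ⟨hgk, ?_⟩
      have heq := hUxu _ he (by rw [Finset.card_erase_of_mem huD, hc]; omega)
      rw [← Finset.insert_erase huD, heq]
    have hg : gam G Finset.univ = gam G (Finset.univ.erase x) := by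
      by_contra hgk
      have hglt : gam G Finset.univ < gam G (Finset.univ.erase x) := lt_of_le_of_ne hg_le hgk
      obtain ⟨F, hF, hFc⟩ := gam_spec G (Finset.univ.erase u)
      have hxW : ∀ D : Finset V, DomOn G Finset.univ D → D.card = gam G Finset.univ →
          x ∈ D ∧ u ∉ D := by
        intro D hD hc
        have hnu : u ∉ D := by
          intro huD
          have := (hwithu D hD hc huD).1
          omega
        refine ⟨?_, hnu⟩
        obtain ⟨d, hd, hcov⟩ := hD.2 u (Finset.mem_univ u)
        rcases hcov with rfl | hAdj
        · exact absurd hd hnu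
        · exact (hu_nbr' d hAdj) ▸ hd
      have hDsu : ∀ D : Finset V, DomOn G Finset.univ D → u ∉ D →
          DomOn G (Finset.univ.erase u) D := by
        intro D hD hnu
        constructor
        · intro d hd
          exact Finset.mem_erase.2 ⟨fun h' => hnu (h' ▸ hd), Finset.mem_univ _⟩
        · intro v _
          exact hD.2 v (Finset.mem_univ v)
      have hfg : gam G (Finset.univ.erase u) ≤ gam G Finset.univ := by
        have := gam_le (hDsu D₁ hD₁ (hxW D₁ hD₁ hD₁c).2)
        omega
      by_cases hxF : x ∈ F
      · have hFuniv : DomOn G Finset.univ F := by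
          refine ⟨Finset.subset_univ _, ?_⟩
          intro v _
          by_cases hvu : v = u
          · exact ⟨x, hxF, Or.inr (hvu ▸ hadj)⟩
          · exact hF.2 v (Finset.mem_erase.2 ⟨hvu, Finset.mem_univ v⟩)
        have hgf : gam G Finset.univ ≤ gam G (Finset.univ.erase u) := by
          have := gam_le hFuniv
          omega
        have e := uniq_gamma h.2 u (hDsu D₁ hD₁ (hxW D₁ hD₁ hD₁c).2) (by omega)
          (hDsu D₂ hD₂ (hxW D₂ hD₂ hD₂c).2) (by omega)
        exact hDne e
      · have huF : u ∉ F := fun h' => (Finset.mem_erase.1 (hF.1 h')).1 rfl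
        have hFsx : DomOn G (Finset.univ.erase x) (insert u F) := by
          constructor
          · intro d hd
            rcases Finset.mem_insert.1 hd with rfl | hdF
            · exact Finset.mem_erase.2 ⟨hux, Finset.mem_univ _⟩
            · exact Finset.mem_erase.2 ⟨fun h' => hxF (h' ▸ hdF), Finset.mem_univ _⟩
          · intro v hv
            by_cases hvu : v = u
            · exact ⟨u, Finset.mem_insert_self _ _, Or.inl hvu.symm⟩
            · obtain ⟨d, hd, hcov⟩ := hF.2 v (Finset.mem_erase.2 ⟨hvu, Finset.mem_univ v⟩)
              exact ⟨d, Finset.mem_insert_of_mem hd, hcov⟩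
        have hk_le : gam G (Finset.univ.erase x) ≤ gam G (Finset.univ.erase u) + 1 := by
          have := gam_le hFsx
          rw [Finset.card_insert_of_notMem huF, hFc] at this
          exact this
        have hfj : D₁.card = gam G (Finset.univ.erase u) := by omega
        have e := uniq_gamma h.2 u (hDsu D₁ hD₁ (hxW D₁ hD₁ hD₁c).2) hfj hF hFc
        have : x ∈ M := by
          have heq := hUx _ hFsx (by rw [Finset.card_insert_of_notMem huF, hFc]; omega)
          have hFM : F = M := by
            have := congrArg (fun S => Finset.erase S u) heq
            simpa [Finset.erase_insert huF, Finset.erase_insert huM] using this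
          rw [← hFM, ← e]
          exact (hxW D₁ hD₁ hD₁c).1
        exact hxM this
    obtain ⟨F, hF, hFc⟩ := gam_spec G (Finset.univ.erase u)
    have hBsu : DomOn G (Finset.univ.erase u) (insert x M) := by
      constructor
      · intro d hd
        rcases Finset.mem_insert.1 hd with rfl | hdM
        · exact Finset.mem_erase.2 ⟨fun h' => hux h'.symm, Finset.mem_univ _⟩
        · exact Finset.mem_erase.2 ⟨(hMel d hdM).1, Finset.mem_univ _⟩
      · intro v hv
        have hvu : v ≠ u := (Finset.mem_erase.1 hv).1
        by_cases hvx : v = x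
        · exact ⟨x, Finset.mem_insert_self _ _, Or.inl hvx.symm⟩
        · obtain ⟨d, hd, hcov⟩ := hM.2 v
            (Finset.mem_erase.2 ⟨hvu, Finset.mem_erase.2 ⟨hvx, Finset.mem_univ v⟩⟩)
          exact ⟨d, Finset.mem_insert_of_mem hd, hcov⟩
    have hf_le : gam G (Finset.univ.erase u) ≤ gam G ((Finset.univ.erase x).erase u) + 1 := by
      have := gam_le hBsu
      rw [Finset.card_insert_of_notMem hxM, hMc] at this
      exact this
    by_cases hxF : x ∈ F
    · -- K2 component case
      have hFuniv : DomOn G Finset.univ F := by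
        refine ⟨Finset.subset_univ _, ?_⟩
        intro v _
        by_cases hvu : v = u
        · exact ⟨x, hxF, Or.inr (hvu ▸ hadj)⟩
        · exact hF.2 v (Finset.mem_erase.2 ⟨hvu, Finset.mem_univ v⟩)
      have hfk : gam G (Finset.univ.erase u) = gam G (Finset.univ.erase x) := by
        have := gam_le hFuniv
        omega
      have hx_nbr : ∀ z, G.Adj x z → z = u := by
        intro z hz
        by_contra hzu
        have hzx : z ≠ x := fun h' => G.loopless.irrefl x (h' ▸ hz)
        have hzM : z ∉ M := by
          intro hzM
          have hdom : DomOn G (Finset.univ.erase u) M := by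
            refine ⟨fun d hd => Finset.mem_erase.2 ⟨(hMel d hd).1, Finset.mem_univ _⟩, ?_⟩
            intro v hv
            have hvu : v ≠ u := (Finset.mem_erase.1 hv).1
            by_cases hvx : v = x
            · exact ⟨z, hzM, Or.inr (hvx ▸ hz.symm)⟩
            · obtain ⟨d, hd, hcov⟩ := hM.2 v
                (Finset.mem_erase.2 ⟨hvu, Finset.mem_erase.2 ⟨hvx, Finset.mem_univ v⟩⟩)
              exact ⟨d, hd, hcov⟩
          have := gam_le hdom
          rw [hMc] at this
          omega
        have hdom : DomOn G (Finset.univ.erase u) (insert z M) := by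
          constructor
          · intro d hd
            rcases Finset.mem_insert.1 hd with rfl | hdM
            · exact Finset.mem_erase.2 ⟨hzu, Finset.mem_univ _⟩
            · exact Finset.mem_erase.2 ⟨(hMel d hdM).1, Finset.mem_univ _⟩
          · intro v hv
            have hvu : v ≠ u := (Finset.mem_erase.1 hv).1
            by_cases hvx : v = x
            · exact ⟨z, Finset.mem_insert_self _ _, Or.inr (hvx ▸ hz.symm)⟩
            · by_cases hvz : v = z
              · exact ⟨z, Finset.mem_insert_self _ _, Or.inl hvz.symm⟩
              · obtain ⟨d, hd, hcov⟩ := hM.2 v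
                  (Finset.mem_erase.2 ⟨hvu, Finset.mem_erase.2 ⟨hvx, Finset.mem_univ v⟩⟩)
                exact ⟨d, Finset.mem_insert_of_mem hd, hcov⟩
        have e1 := uniq_gamma h.2 u hdom
          (by rw [Finset.card_insert_of_notMem hzM, hMc]; omega) hBsu
          (by rw [Finset.card_insert_of_notMem hxM, hMc]; omega)
        have hmem : z ∈ insert x M := e1 ▸ Finset.mem_insert_self z M
        rcases Finset.mem_insert.1 hmem with h' | h'
        · exact hzx h'
        · exact hzM h'
      have hcard2 : 0 < ((Finset.univ.erase x).erase u).card := by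
        rw [Finset.card_erase_of_mem (Finset.mem_erase.2 ⟨hux, Finset.mem_univ u⟩),
          Finset.card_erase_of_mem (Finset.mem_univ x), Finset.card_univ]
        omega
      obtain ⟨w, hw⟩ := Finset.card_pos.1 hcard2
      have hwu : w ≠ u := (Finset.mem_erase.1 hw).1
      have hwx : w ≠ x := (Finset.mem_erase.1 (Finset.mem_erase.1 hw).2).1
      obtain ⟨S, hS, hSc⟩ := gam_spec G (Finset.univ.erase w)
      have hnboth : ¬ (u ∈ S ∧ x ∈ S) := by
        rintro ⟨huS, hxS⟩
        have hdom : DomOn G (Finset.univ.erase w) (S.erase u) := by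
          constructor
          · exact fun d hd => hS.1 ((Finset.erase_subset _ _) hd)
          · intro v hv
            obtain ⟨d, hd, hcov⟩ := hS.2 v hv
            by_cases hdu : d = u
            · subst hdu
              rcases hcov with rfl | hAdj
              · exact ⟨x, Finset.mem_erase.2 ⟨G.ne_of_adj hadj, hxS⟩, Or.inr hadj⟩
              · have hvx := hu_nbr v hAdj
                subst hvx
                exact ⟨v, Finset.mem_erase.2 ⟨G.ne_of_adj hadj, hxS⟩, Or.inl rfl⟩
            · exact ⟨d, Finset.mem_erase.2 ⟨hdu, hd⟩, hcov⟩
        have hle := gam_le hdom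
        rw [Finset.card_erase_of_mem huS, hSc] at hle
        have hpos := Finset.card_pos.2 ⟨u, huS⟩
        omega
      have huxS : u ∈ S ∨ x ∈ S := by
        obtain ⟨d, hd, hcov⟩ := hS.2 u
          (Finset.mem_erase.2 ⟨fun h' => hwu h'.symm, Finset.mem_univ u⟩)
        rcases hcov with rfl | hAdj
        · exact Or.inl hd
        · exact Or.inr ((hu_nbr' d hAdj) ▸ hd)
      rcases huxS with huS | hxS
      · have hxS : x ∉ S := fun hxS => hnboth ⟨huS, hxS⟩
        have hdom : DomOn G (Finset.univ.erase w) (insert x (S.erase u)) := by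
          constructor
          · intro d hd
            rcases Finset.mem_insert.1 hd with rfl | hdS
            · exact Finset.mem_erase.2 ⟨fun h' => hwx h'.symm, Finset.mem_univ _⟩
            · exact hS.1 ((Finset.erase_subset _ _) hdS)
          · intro v hv
            by_cases hvu : v = u
            · exact ⟨x, Finset.mem_insert_self _ _, Or.inr (hvu ▸ hadj)⟩
            · by_cases hvx : v = x
              · exact ⟨x, Finset.mem_insert_self _ _, Or.inl hvx.symm⟩
              · obtain ⟨d, hd, hcov⟩ := hS.2 v hv
                have hdu : d ≠ u := by
                  rintro rfl
                  rcases hcov with h' | h'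
                  · exact hvu h'.symm
                  · exact hvx (hu_nbr v h')
                exact ⟨d, Finset.mem_insert_of_mem (Finset.mem_erase.2 ⟨hdu, hd⟩), hcov⟩
        have hxeS : x ∉ S.erase u := fun h' => hxS ((Finset.erase_subset _ _) h')
        have e1 := uniq_gamma h.2 w hdom
          (by
            rw [Finset.card_insert_of_notMem hxeS, Finset.card_erase_of_mem huS, hSc]
            have hpos := Finset.card_pos.2 ⟨u, huS⟩
            omega) hS hSc
        have hmem : u ∈ insert x (S.erase u) := e1.symm ▸ huS
        rcases Finset.mem_insert.1 hmem with h' | h'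
        · exact (G.ne_of_adj hadj) h'.symm
        · exact (Finset.mem_erase.1 h').1 rfl
      · have huS : u ∉ S := fun huS => hnboth ⟨huS, hxS⟩
        have hdom : DomOn G (Finset.univ.erase w) (insert u (S.erase x)) := by
          constructor
          · intro d hd
            rcases Finset.mem_insert.1 hd with rfl | hdS
            · exact Finset.mem_erase.2 ⟨fun h' => hwu h'.symm, Finset.mem_univ _⟩
            · exact hS.1 ((Finset.erase_subset _ _) hdS)
          · intro v hv
            by_cases hvx : v = x
            · exact ⟨u, Finset.mem_insert_self _ _, Or.inr (hvx ▸ hadj.symm)⟩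
            · by_cases hvu : v = u
              · exact ⟨u, Finset.mem_insert_self _ _, Or.inl hvu.symm⟩
              · obtain ⟨d, hd, hcov⟩ := hS.2 v hv
                have hdx : d ≠ x := by
                  rintro rfl
                  rcases hcov with h' | h'
                  · exact hvx h'.symm
                  · exact hvu (hx_nbr v h')
                exact ⟨d, Finset.mem_insert_of_mem (Finset.mem_erase.2 ⟨hdx, hd⟩), hcov⟩
        have hueS : u ∉ S.erase x := fun h' => huS ((Finset.erase_subset _ _) h')
        have e1 := uniq_gamma h.2 w hdom
          (by
            rw [Finset.card_insert_of_notMem hueS, Finset.card_erase_of_mem hxS, hSc]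
            have hpos := Finset.card_pos.2 ⟨x, hxS⟩
            omega) hS hSc
        have hmem : x ∈ insert u (S.erase x) := e1.symm ▸ hxS
        rcases Finset.mem_insert.1 hmem with h' | h'
        · exact (G.ne_of_adj hadj) h'
        · exact (Finset.mem_erase.1 h').1 rfl
    · -- x ∉ F : the hard corner
      have huF : u ∉ F := fun h' => (Finset.mem_erase.1 (hF.1 h')).1 rfl
      have hFsx : DomOn G (Finset.univ.erase x) (insert u F) := by
        constructor
        · intro d hd
          rcases Finset.mem_insert.1 hd with rfl | hdF
          · exact Finset.mem_erase.2 ⟨hux, Finset.mem_univ _⟩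
          · exact Finset.mem_erase.2 ⟨fun h' => hxF (h' ▸ hdF), Finset.mem_univ _⟩
        · intro v hv
          by_cases hvu : v = u
          · exact ⟨u, Finset.mem_insert_self _ _, Or.inl hvu.symm⟩
          · obtain ⟨d, hd, hcov⟩ := hF.2 v (Finset.mem_erase.2 ⟨hvu, Finset.mem_univ v⟩)
            exact ⟨d, Finset.mem_insert_of_mem hd, hcov⟩
      have hk_le2 : gam G (Finset.univ.erase x) ≤ gam G (Finset.univ.erase u) + 1 := by
        have := gam_le hFsx
        rw [Finset.card_insert_of_notMem huF, hFc] at this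
        exact this
      have hfneq : gam G (Finset.univ.erase u) ≠ gam G (Finset.univ.erase x) := by
        intro hfeq
        have e1 := uniq_gamma h.2 u hBsu
          (by rw [Finset.card_insert_of_notMem hxM, hMc]; omega) hF hFc
        exact hxF (e1 ▸ Finset.mem_insert_self x M)
      have hFM : F = M := by
        have heq := hUx _ hFsx (by rw [Finset.card_insert_of_notMem huF, hFc]; omega)
        have := congrArg (fun Q => Finset.erase Q u) heq
        simpa [Finset.erase_insert huF, Finset.erase_insert huM] using this
      subst hFM
      have hMsu : DomOn G (Finset.univ.erase u) F := hF
      have hAuniv : DomOn G Finset.univ (insert u F) := by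
        refine ⟨Finset.subset_univ _, ?_⟩
        intro v _
        by_cases hvu : v = u
        · exact ⟨u, Finset.mem_insert_self _ _, Or.inl hvu.symm⟩
        · obtain ⟨d, hd, hcov⟩ := hMsu.2 v (Finset.mem_erase.2 ⟨hvu, Finset.mem_univ v⟩)
          exact ⟨d, Finset.mem_insert_of_mem hd, hcov⟩
      have hW : ∃ w, w ∉ F ∧ w ≠ u ∧ w ≠ x := by
        by_contra hW
        push_neg at hW
        obtain ⟨m₀, hm₀M, hm₀cov⟩ := hMsu.2 x
          (Finset.mem_erase.2 ⟨fun h' => hux h'.symm, Finset.mem_univ x⟩)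
        have hm₀x : G.Adj m₀ x := hm₀cov.resolve_left (fun h' => hxM (h' ▸ hm₀M))
        have hDstar : DomOn G Finset.univ (Finset.univ.filter (fun v => ¬ G.Adj x v)) := by
          refine ⟨Finset.subset_univ _, ?_⟩
          intro v _
          by_cases hvx : G.Adj x v
          · exact ⟨x, Finset.mem_filter.2 ⟨Finset.mem_univ x, G.loopless.irrefl x⟩, Or.inr hvx⟩
          · exact ⟨v, Finset.mem_filter.2 ⟨Finset.mem_univ v, hvx⟩, Or.inl rfl⟩
        have hsub : Finset.univ.filter (fun v => ¬ G.Adj x v) ⊆ (Finset.univ.erase u).erase m₀ := by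
          intro d hd
          have hd' := (Finset.mem_filter.1 hd).2
          refine Finset.mem_erase.2 ⟨?_, Finset.mem_erase.2 ⟨?_, Finset.mem_univ d⟩⟩
          · rintro rfl
            exact hd' hm₀x.symm
          · rintro rfl
            exact hd' hadj
        have hm₀u : m₀ ≠ u := (hMel m₀ hm₀M).1
        have hcard1 : ((Finset.univ.erase u).erase m₀).card + 2 = Fintype.card V := by
          rw [Finset.card_erase_of_mem
              (Finset.mem_erase.2 ⟨hm₀u, Finset.mem_univ _⟩),
            Finset.card_erase_of_mem (Finset.mem_univ u), Finset.card_univ]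
          omega
        have hn_le : Fintype.card V ≤ F.card + 2 := by
          have hsub2 : (Finset.univ : Finset V) ⊆ insert u (insert x F) := by
            intro v _
            by_cases hvM : v ∈ F
            · exact Finset.mem_insert_of_mem (Finset.mem_insert_of_mem hvM)
            · by_cases hvu : v = u
              · exact hvu ▸ Finset.mem_insert_self _ _
              · exact (hW v hvM hvu) ▸
                  Finset.mem_insert_of_mem (Finset.mem_insert_self _ _)
          have h4 := Finset.card_le_card hsub2
          have h5 := Finset.card_insert_le u (insert x F)
          have h6 := Finset.card_insert_le x F
          rw [Finset.card_univ] at h4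
          omega
        have hle := gam_le hDstar
        have hle2 := Finset.card_le_card hsub
        omega
      obtain ⟨w, hwM, hwu, hwx⟩ := hW
      have hPKG : ∀ y, y ∉ F → y ≠ u → y ≠ x →
          ∃ T : Finset V, DomOn G (Finset.univ.erase y) T ∧
            T.card = gam G ((Finset.univ.erase x).erase u) ∧ x ∈ T ∧ u ∉ T ∧
            (∀ t ∈ T, ¬(t = y ∨ G.Adj t y)) := by
        intro y hyM hyu hyx
        obtain ⟨T, hT, hTc⟩ := gam_spec G (Finset.univ.erase y)
        have hA_sy : DomOn G (Finset.univ.erase y) (insert u F) := by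
          constructor
          · intro d hd
            rcases Finset.mem_insert.1 hd with rfl | hdM
            · exact Finset.mem_erase.2 ⟨fun h' => hyu h'.symm, Finset.mem_univ _⟩
            · exact Finset.mem_erase.2 ⟨fun h' => hyM (h' ▸ hdM), Finset.mem_univ _⟩
          · intro v _
            exact hAuniv.2 v (Finset.mem_univ v)
        have hB_sy : DomOn G (Finset.univ.erase y) (insert x F) := by
          constructor
          · intro d hd
            rcases Finset.mem_insert.1 hd with rfl | hdM
            · exact Finset.mem_erase.2 ⟨fun h' => hyx h'.symm, Finset.mem_univ _⟩
            · exact Finset.mem_erase.2 ⟨fun h' => hyM (h' ▸ hdM), Finset.mem_univ _⟩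
          · intro v _
            exact hBuniv.2 v (Finset.mem_univ v)
        have hy_le : gam G (Finset.univ.erase y) ≤ F.card + 1 := by
          have := gam_le hA_sy
          rw [Finset.card_insert_of_notMem huM] at this
          exact this
        have hyT : y ∉ T := fun h' => (Finset.mem_erase.1 (hT.1 h')).1 rfl
        have hTuniv : DomOn G Finset.univ (insert y T) := by
          refine ⟨Finset.subset_univ _, ?_⟩
          intro v _
          by_cases hvy : v = y
          · exact ⟨y, Finset.mem_insert_self _ _, Or.inl hvy.symm⟩
          · obtain ⟨d, hd, hcov⟩ := hT.2 v (Finset.mem_erase.2 ⟨hvy, Finset.mem_univ v⟩)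
            exact ⟨d, Finset.mem_insert_of_mem hd, hcov⟩
        have hy_ge : gam G Finset.univ ≤ gam G (Finset.univ.erase y) + 1 := by
          have := gam_le hTuniv
          rw [Finset.card_insert_of_notMem hyT, hTc] at this
          exact this
        by_cases hyk : gam G (Finset.univ.erase y) = F.card + 1
        · exfalso
          have e1 := uniq_gamma h.2 y hA_sy
            (by rw [Finset.card_insert_of_notMem huM]; omega) hB_sy
            (by rw [Finset.card_insert_of_notMem hxM]; omega)
          have hmem : u ∈ insert x F := e1 ▸ Finset.mem_insert_self u F
          rcases Finset.mem_insert.1 hmem with h' | h'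
          · exact (G.ne_of_adj hadj) h'.symm
          · exact huM h'
        · have hyj : gam G (Finset.univ.erase y) = F.card := by omega
          have hTcj : T.card = gam G ((Finset.univ.erase x).erase u) := by
            rw [hTc, hyj, hMc]
          have huT : u ∉ T := by
            intro huT
            have hcardins : (insert y T).card = gam G Finset.univ := by
              rw [Finset.card_insert_of_notMem hyT, hTc, hyj]
              omega
            have hres := (hwithu _ hTuniv hcardins (Finset.mem_insert_of_mem huT)).2
            have hy' : y ∈ insert u F := hres ▸ Finset.mem_insert_self y T
            rcases Finset.mem_insert.1 hy' with h' | h'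
            · exact hyu h'
            · exact hyM h'
          have hxT : x ∈ T := by
            obtain ⟨d, hd, hcov⟩ := hT.2 u
              (Finset.mem_erase.2 ⟨fun h' => hyu h'.symm, Finset.mem_univ u⟩)
            rcases hcov with rfl | hAdj
            · exact absurd hd huT
            · exact (hu_nbr' d hAdj) ▸ hd
          have hnocov : ∀ t ∈ T, ¬(t = y ∨ G.Adj t y) := by
            intro t ht hcovy
            have hTsu : DomOn G (Finset.univ.erase u) T := by
              constructor
              · intro d hd
                exact Finset.mem_erase.2 ⟨fun h' => huT (h' ▸ hd), Finset.mem_univ _⟩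
              · intro v hv
                by_cases hvy : v = y
                · subst hvy
                  exact ⟨t, ht, hcovy⟩
                · exact hT.2 v (Finset.mem_erase.2 ⟨hvy, Finset.mem_univ v⟩)
            have e2 := uniq_gamma h.2 u hTsu (by rw [hTc, hyj]; exact hFc) hMsu hFc
            exact hxM (e2 ▸ hxT)
          exact ⟨T, hT, hTcj, hxT, huT, hnocov⟩
      obtain ⟨T, hT, hTc, hxT, huT, hnocovT⟩ := hPKG w hwM hwu hwx
      have hwT : w ∉ T := fun h' => hnocovT w h' (Or.inl rfl)
      obtain ⟨m₁, hm₁M, hm₁cov⟩ := hMsu.2 w (Finset.mem_erase.2 ⟨hwu, Finset.mem_univ w⟩)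
      have hm₁w : G.Adj m₁ w := hm₁cov.resolve_left (fun h' => hwM (h' ▸ hm₁M))
      have hm₁T : m₁ ∉ T := fun h' => hnocovT m₁ h' (Or.inr hm₁w)
      have hu_nin : u ∉ T.erase x := fun h' => huT ((Finset.erase_subset _ _) h')
      have hw_nin : w ∉ insert u (T.erase x) := by
        intro h'
        rcases Finset.mem_insert.1 h' with h'' | h''
        · exact hwu h''
        · exact hwT ((Finset.erase_subset _ _) h'')
      have hCsub : insert w (insert u (T.erase x)) ⊆ Finset.univ.erase x := by
        intro d hd
        rcases Finset.mem_insert.1 hd with rfl | hd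
        · exact Finset.mem_erase.2 ⟨hwx, Finset.mem_univ _⟩
        · rcases Finset.mem_insert.1 hd with rfl | hd
          · exact Finset.mem_erase.2 ⟨hux, Finset.mem_univ _⟩
          · exact Finset.mem_erase.2 ⟨(Finset.mem_erase.1 hd).1, Finset.mem_univ _⟩
      have hCcard : (insert w (insert u (T.erase x))).card = gam G (Finset.univ.erase x) := by
        rw [Finset.card_insert_of_notMem hw_nin, Finset.card_insert_of_notMem hu_nin,
          Finset.card_erase_of_mem hxT, hTc]
        have hpos := Finset.card_pos.2 ⟨x, hxT⟩
        omega
      have hCnotdom : ¬ (∀ v ∈ Finset.univ.erase x,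
          ∃ d ∈ insert w (insert u (T.erase x)), d = v ∨ G.Adj d v) := by
        intro hcov
        have heq := hUx _ ⟨hCsub, hcov⟩ hCcard
        have hmem : w ∈ insert u F := heq ▸ Finset.mem_insert_self _ _
        rcases Finset.mem_insert.1 hmem with h' | h'
        · exact hwu h'
        · exact hwM h'
      push_neg at hCnotdom
      obtain ⟨p, hpsx, hpnocov⟩ := hCnotdom
      have hpx : p ≠ x := (Finset.mem_erase.1 hpsx).1
      have hpw_pack := hpnocov w (Finset.mem_insert_self _ _)
      have hpu_pack := hpnocov u (Finset.mem_insert_of_mem (Finset.mem_insert_self _ _))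
      have hTwuniv : DomOn G Finset.univ (insert w T) := by
        refine ⟨Finset.subset_univ _, ?_⟩
        intro v _
        by_cases hvw : v = w
        · exact ⟨w, Finset.mem_insert_self _ _, Or.inl hvw.symm⟩
        · obtain ⟨d, hd, hcov⟩ := hT.2 v (Finset.mem_erase.2 ⟨hvw, Finset.mem_univ v⟩)
          exact ⟨d, Finset.mem_insert_of_mem hd, hcov⟩
      obtain ⟨d0, hd0, hd0cov⟩ := hTwuniv.2 p (Finset.mem_univ p)
      have hxp : G.Adj x p := by
        rcases Finset.mem_insert.1 hd0 with rfl | hd0T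
        · exact absurd hd0cov (not_or.2 hpw_pack)
        · by_cases hdx : d0 = x
          · subst hdx
            exact hd0cov.resolve_left (fun h' => hpx h'.symm)
          · exact absurd hd0cov (not_or.2 (hpnocov d0 (Finset.mem_insert_of_mem
              (Finset.mem_insert_of_mem (Finset.mem_erase.2 ⟨hdx, hd0T⟩)))))
      have hpu : p ≠ u := by
        rintro rfl
        exact hpu_pack.1 rfl
      have hpw : p ≠ w := by
        rintro rfl
        exact hpw_pack.1 rfl
      have hpT : p ∉ T := by
        intro hpT'
        exact (hpnocov p (Finset.mem_insert_of_mem (Finset.mem_insert_of_mem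
          (Finset.mem_erase.2 ⟨hpx, hpT'⟩)))).1 rfl
      have hpM : p ∈ F := by
        by_contra hpM
        obtain ⟨T', _, _, hxT', _, hnocovT'⟩ := hPKG p hpM hpu hpx
        exact hnocovT' x hxT' (Or.inr hxp)
      have hpm₁ : p ≠ m₁ := by
        rintro rfl
        exact hpw_pack.2 hm₁w.symm
      obtain ⟨R, hR, hRc⟩ := gam_spec G (Finset.univ.erase p)
      have hTw_sp : DomOn G (Finset.univ.erase p) (insert w T) := by
        constructor
        · intro d hd
          rcases Finset.mem_insert.1 hd with rfl | hdT
          · exact Finset.mem_erase.2 ⟨fun h' => hpw h'.symm, Finset.mem_univ _⟩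
          · exact Finset.mem_erase.2 ⟨fun h' => hpT (h' ▸ hdT), Finset.mem_univ _⟩
        · intro v _
          exact hTwuniv.2 v (Finset.mem_univ v)
      have hTm_univ : DomOn G Finset.univ (insert m₁ T) := by
        refine ⟨Finset.subset_univ _, ?_⟩
        intro v _
        by_cases hvw : v = w
        · exact ⟨m₁, Finset.mem_insert_self _ _, Or.inr (hvw ▸ hm₁w)⟩
        · obtain ⟨d, hd, hcov⟩ := hT.2 v (Finset.mem_erase.2 ⟨hvw, Finset.mem_univ v⟩)
          exact ⟨d, Finset.mem_insert_of_mem hd, hcov⟩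
      have hTm_sp : DomOn G (Finset.univ.erase p) (insert m₁ T) := by
        constructor
        · intro d hd
          rcases Finset.mem_insert.1 hd with rfl | hdT
          · exact Finset.mem_erase.2 ⟨fun h' => hpm₁ h'.symm, Finset.mem_univ _⟩
          · exact Finset.mem_erase.2 ⟨fun h' => hpT (h' ▸ hdT), Finset.mem_univ _⟩
        · intro v _
          exact hTm_univ.2 v (Finset.mem_univ v)
      have hp_le : gam G (Finset.univ.erase p) ≤ T.card + 1 := by
        have := gam_le hTw_sp
        rw [Finset.card_insert_of_notMem hwT] at this
        exact this
      by_cases hpk : gam G (Finset.univ.erase p) = T.card + 1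
      · have e1 := uniq_gamma h.2 p hTw_sp
          (by rw [Finset.card_insert_of_notMem hwT]; omega) hTm_sp
          (by rw [Finset.card_insert_of_notMem hm₁T]; omega)
        have hmem : w ∈ insert m₁ T := e1 ▸ Finset.mem_insert_self w T
        rcases Finset.mem_insert.1 hmem with h' | h'
        · exact (G.ne_of_adj hm₁w) h'.symm
        · exact hwT h'
      · have hpR : p ∉ R := fun h' => (Finset.mem_erase.1 (hR.1 h')).1 rfl
        have hRuniv : DomOn G Finset.univ (insert p R) := by
          refine ⟨Finset.subset_univ _, ?_⟩
          intro v _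
          by_cases hvp : v = p
          · exact ⟨p, Finset.mem_insert_self _ _, Or.inl hvp.symm⟩
          · obtain ⟨d, hd, hcov⟩ := hR.2 v (Finset.mem_erase.2 ⟨hvp, Finset.mem_univ v⟩)
            exact ⟨d, Finset.mem_insert_of_mem hd, hcov⟩
        have hp_ge : gam G Finset.univ ≤ gam G (Finset.univ.erase p) + 1 := by
          have := gam_le hRuniv
          rw [Finset.card_insert_of_notMem hpR, hRc] at this
          exact this
        have hpj : gam G (Finset.univ.erase p) = F.card := by omega
        by_cases huR : u ∈ R
        · have hRins := (hwithu (insert p R) hRuniv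
            (by rw [Finset.card_insert_of_notMem hpR, hRc, hpj]; omega)
            (Finset.mem_insert_of_mem huR)).2
          have hRE : R = insert u (F.erase p) := by
            have h1 : R = (insert p R).erase p := (Finset.erase_insert hpR).symm
            rw [h1, hRins, Finset.erase_insert_of_ne (fun h' => hpu h'.symm)]
          have hB'dom : DomOn G (Finset.univ.erase p) (insert x (F.erase p)) := by
            constructor
            · intro d hd
              rcases Finset.mem_insert.1 hd with rfl | hd'
              · exact Finset.mem_erase.2 ⟨fun h' => hpx h'.symm, Finset.mem_univ _⟩
              · exact Finset.mem_erase.2 ⟨(Finset.mem_erase.1 hd').1, Finset.mem_univ _⟩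
            · intro v hv
              obtain ⟨d, hd, hcov⟩ := hR.2 v hv
              rw [hRE] at hd
              rcases Finset.mem_insert.1 hd with rfl | hd'
              · rcases hcov with rfl | hAdj
                · exact ⟨x, Finset.mem_insert_self _ _, Or.inr hadj⟩
                · have hvx := hu_nbr v hAdj
                  subst hvx
                  exact ⟨v, Finset.mem_insert_self _ _, Or.inl rfl⟩
              · exact ⟨d, Finset.mem_insert_of_mem hd', hcov⟩
          have hxMe : x ∉ F.erase p := fun h' => hxM ((Finset.erase_subset _ _) h')
          have e2 := uniq_gamma h.2 p hB'dom
            (by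
              rw [Finset.card_insert_of_notMem hxMe, Finset.card_erase_of_mem hpM, hpj]
              have hpos := Finset.card_pos.2 ⟨p, hpM⟩
              omega) hR hRc
          have hmem : u ∈ insert x (F.erase p) := e2.symm ▸ huR
          rcases Finset.mem_insert.1 hmem with h' | h'
          · exact (G.ne_of_adj hadj) h'.symm
          · exact huM ((Finset.erase_subset _ _) h')
        · have hxR : x ∈ R := by
            obtain ⟨d, hd, hcov⟩ := hR.2 u
              (Finset.mem_erase.2 ⟨fun h' => hpu h'.symm, Finset.mem_univ u⟩)
            rcases hcov with rfl | hAdj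
            · exact absurd hd huR
            · exact (hu_nbr' d hAdj) ▸ hd
          have hRsu : DomOn G (Finset.univ.erase u) R := by
            constructor
            · intro d hd
              exact Finset.mem_erase.2 ⟨fun h' => huR (h' ▸ hd), Finset.mem_univ _⟩
            · intro v hv
              by_cases hvp : v = p
              · exact ⟨x, hxR, Or.inr (hvp ▸ hxp)⟩
              · exact hR.2 v (Finset.mem_erase.2 ⟨hvp, Finset.mem_univ v⟩)
          have e3 := uniq_gamma h.2 u hRsu (by rw [hRc, hpj]; exact hFc) hMsu hFc
          exact hxM (e3 ▸ hxR)
  · -- u is isolated in G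
    have hiso : ∀ z, ¬ G.Adj u z := by
      intro z hz
      have hzz := hu_nbr z hz
      subst hzz
      exact hadj hz.symm
    have hu_in : ∀ D : Finset V, DomOn G Finset.univ D → u ∈ D := by
      intro D hD
      obtain ⟨d, hd, hcov⟩ := hD.2 u (Finset.mem_univ u)
      rcases hcov with rfl | hAdj
      · exact hd
      · exact absurd hAdj.symm (hiso d)
    have herase : ∀ D : Finset V, DomOn G Finset.univ D →
        DomOn G (Finset.univ.erase u) (D.erase u) := by
      intro D hD
      constructor
      · intro d hd
        exact Finset.mem_erase.2 ⟨(Finset.mem_erase.1 hd).1, Finset.mem_univ d⟩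
      · intro v hv
        have hvu : v ≠ u := (Finset.mem_erase.1 hv).1
        obtain ⟨d, hd, hcov⟩ := hD.2 v (Finset.mem_univ v)
        have hdu : d ≠ u := by
          rintro rfl
          rcases hcov with h' | h'
          · exact hvu h'.symm
          · exact hiso v h'
        exact ⟨d, Finset.mem_erase.2 ⟨hdu, hd⟩, hcov⟩
    have h1 : gam G (Finset.univ.erase u) ≤ gam G Finset.univ - 1 := by
      have := gam_le (herase D₁ hD₁)
      rw [Finset.card_erase_of_mem (hu_in D₁ hD₁), hD₁c] at this
      exact this
    have hgpos : 1 ≤ gam G Finset.univ := by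
      have hpos := Finset.card_pos.2 ⟨u, hu_in D₁ hD₁⟩
      omega
    obtain ⟨E, hE, hEc⟩ := gam_spec G (Finset.univ.erase u)
    have hEu : u ∉ E := fun hu' => (Finset.mem_erase.1 (hE.1 hu')).1 rfl
    have h2 : gam G Finset.univ ≤ gam G (Finset.univ.erase u) + 1 := by
      have hdom : DomOn G Finset.univ (insert u E) := by
        refine ⟨Finset.subset_univ _, ?_⟩
        intro v _
        by_cases hvu : v = u
        · exact ⟨u, Finset.mem_insert_self _ _, Or.inl hvu.symm⟩
        · obtain ⟨d, hd, hcov⟩ := hE.2 v (Finset.mem_erase.2 ⟨hvu, Finset.mem_univ v⟩)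
          exact ⟨d, Finset.mem_insert_of_mem hd, hcov⟩
      have := gam_le hdom
      rw [Finset.card_insert_of_notMem hEu, hEc] at this
      exact this
    have hgsu : gam G (Finset.univ.erase u) = gam G Finset.univ - 1 := by omega
    have e1 : D₁.erase u = D₂.erase u := by
      apply uniq_gamma h.2 u (herase D₁ hD₁) ?_ (herase D₂ hD₂) ?_
      · rw [Finset.card_erase_of_mem (hu_in D₁ hD₁), hD₁c, hgsu]
      · rw [Finset.card_erase_of_mem (hu_in D₂ hD₂), hD₂c, hgsu]
    apply hDne
    rw [← Finset.insert_erase (hu_in D₁ hD₁), ← Finset.insert_erase (hu_in D₂ hD₂), e1]
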